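/- The asymptotic density of squarefree numbers is 6/π²: if Q(n) denotes the number of squarefree integers m with 1 ≤ m ≤ n, then Q(n)/n converges to 6/π² as n → ∞. -/

import Mathlib

open Finset Filter ArithmeticFunction
open scoped ArithmeticFunction.Moebius

noncomputable def sqpart (m : ℕ) : ℕ :=
  (m.factorization.mapRange (· / 2) rfl).prod (· ^ ·)

lemma sqpart_factorization (m : ℕ) :
    (sqpart m).factorization = m.factorization.mapRange (· / 2) rfl := by
  apply Nat.prod_pow_factorization_eq_self
  intro p hp
  have := Finsupp.support_mapRange (f := fun k => k / 2) (hf := rfl) (g := m.factorization) hp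
  exact Nat.prime_of_mem_primeFactors (by simpa [Nat.support_factorization] using this)

lemma sqpart_ne_zero (m : ℕ) : sqpart m ≠ 0 := by
  rw [sqpart, Finsupp.prod]
  apply Finset.prod_ne_zero_iff.mpr
  intro p hp
  have hp' := Finsupp.support_mapRange (f := fun k => k / 2) (hf := rfl) (g := m.factorization) hp
  have hpp := Nat.prime_of_mem_primeFactors (by simpa [Nat.support_factorization] using hp')
  exact pow_ne_zero _ hpp.ne_zero

lemma dvd_sqpart_iff {m d : ℕ} (hm : m ≠ 0) (hd : d ≠ 0) : d ∣ sqpart m ↔ d ^ 2 ∣ m := by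
  rw [← Nat.factorization_le_iff_dvd hd (sqpart_ne_zero m),
    ← Nat.factorization_le_iff_dvd (pow_ne_zero 2 hd) hm, sqpart_factorization,
    Nat.factorization_pow]
  constructor
  · intro h p
    have := h p
    simp only [Finsupp.mapRange_apply, Finsupp.smul_apply, smul_eq_mul] at this ⊢
    omega
  · intro h p
    have := h p
    simp only [Finsupp.mapRange_apply, Finsupp.smul_apply, smul_eq_mul] at this ⊢
    omega

lemma sqpart_eq_one_iff {m : ℕ} (hm : m ≠ 0) : sqpart m = 1 ↔ Squarefree m := by
  rw [Nat.squarefree_iff_factorization_le_one hm]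
  constructor
  · intro h p
    have h2 := sqpart_factorization m
    rw [h, Nat.factorization_one] at h2
    have := congrFun (congrArg (⇑) h2.symm) p
    simp only [Finsupp.mapRange_apply, Finsupp.coe_zero, Pi.zero_apply] at this
    omega
  · intro h
    have : m.factorization.mapRange (· / 2) rfl = 0 := by
      ext p
      have := h p
      simp only [Finsupp.mapRange_apply, Finsupp.coe_zero, Pi.zero_apply]
      omega
    rw [sqpart, this]
    simp

lemma indicator_eq {m : ℕ} (hm : m ≠ 0) :
    (if Squarefree m then (1 : ℤ) else 0) = ∑ d ∈ Icc 1 m, if d ^ 2 ∣ m then μ d else 0 := by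
  rw [← Finset.sum_filter]
  have hset : (Icc 1 m).filter (fun d => d ^ 2 ∣ m) = (sqpart m).divisors := by
    ext d
    simp only [mem_filter, mem_Icc, Nat.mem_divisors]
    constructor
    · rintro ⟨⟨h1, _⟩, h2⟩
      exact ⟨(dvd_sqpart_iff hm (by omega)).mpr h2, sqpart_ne_zero m⟩
    · rintro ⟨h1, -⟩
      have hd : d ≠ 0 := by
        rintro rfl
        exact sqpart_ne_zero m (Nat.eq_zero_of_zero_dvd h1)
      have h2 := (dvd_sqpart_iff hm hd).mp h1
      refine ⟨⟨by omega, Nat.le_of_dvd (Nat.pos_of_ne_zero hm) (dvd_trans (dvd_pow_self d (by norm_num)) h2)⟩, h2⟩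
  rw [hset]
  have := congrArg (fun f => f (sqpart m)) (moebius_mul_coe_zeta)
  simp only [ArithmeticFunction.coe_mul_zeta_apply, ArithmeticFunction.one_apply] at this
  rw [this]
  simp [sqpart_eq_one_iff hm]

lemma count_eq (n : ℕ) :
    ((((Icc 1 n).filter fun m => Squarefree m).card : ℤ)) =
      ∑ d ∈ Icc 1 n, μ d * (n / d ^ 2 : ℕ) := by
  have h1 : ((((Icc 1 n).filter fun m => Squarefree m).card : ℤ))
      = ∑ m ∈ Icc 1 n, if Squarefree m then (1 : ℤ) else 0 := by
    simp [Finset.sum_boole]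
  rw [h1]
  have h2 : ∀ m ∈ Icc 1 n, (if Squarefree m then (1 : ℤ) else 0)
      = ∑ d ∈ Icc 1 n, if d ^ 2 ∣ m then μ d else 0 := by
    intro m hm
    rw [mem_Icc] at hm
    rw [indicator_eq (by omega)]
    apply Finset.sum_subset (Icc_subset_Icc_right hm.2)
    intro d hd hdm
    rw [mem_Icc] at hd hdm
    rw [if_neg]
    intro hdvd
    have h3 := Nat.le_of_dvd (by omega) hdvd
    have h4 : d ≤ d ^ 2 := Nat.le_self_pow two_ne_zero d
    omega
  rw [Finset.sum_congr rfl h2, Finset.sum_comm]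
  refine Finset.sum_congr rfl fun d hd => ?_
  have hIoc : Icc 1 n = Ioc 0 n := by ext x; simp; omega
  rw [← Finset.sum_filter, Finset.sum_const, hIoc,
    Nat.Ioc_filter_dvd_card_eq_div n (d ^ 2)]
  rw [nsmul_eq_mul, mul_comm]

lemma summable_mu_div_sq : Summable (fun d : ℕ => (μ d : ℝ) / d ^ 2) := by
  apply Summable.of_abs
  apply Summable.of_nonneg_of_le (fun d => abs_nonneg _) (fun d => ?_)
    (Real.summable_one_div_nat_pow.mpr one_lt_two)
  rw [abs_div, abs_of_nonneg (by positivity : (0:ℝ) ≤ (d:ℝ) ^ 2)]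
  rcases eq_or_ne d 0 with rfl | hd
  · simp
  · apply div_le_div_of_nonneg_right ?_ (by positivity)
    exact_mod_cast ArithmeticFunction.abs_moebius_le_one (n := d)

lemma tsum_mu_div_sq : ∑' d : ℕ, (μ d : ℝ) / d ^ 2 = 6 / Real.pi ^ 2 := by
  have h2 : (1 : ℝ) < (2 : ℂ).re := by norm_num
  have hz := ArithmeticFunction.LSeries_zeta_mul_Lseries_moebius h2
  have hze := ArithmeticFunction.LSeries_zeta_eq_riemannZeta h2
  rw [hze, riemannZeta_two] at hz
  have hL : LSeries (fun n => (μ n : ℂ)) 2 = ((∑' d : ℕ, (μ d : ℝ) / d ^ 2 : ℝ) : ℂ) := by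
    rw [Complex.ofReal_tsum, LSeries]
    congr 1
    ext n
    rcases eq_or_ne n 0 with rfl | hn
    · simp [LSeries.term]
    · rw [LSeries.term_of_ne_zero hn]
      push_cast
      rw [Complex.cpow_ofNat]
  rw [hL] at hz
  have hpi : (Real.pi : ℂ) ^ 2 / 6 ≠ 0 := by
    simp only [ne_eq, div_eq_zero_iff, pow_eq_zero_iff, Complex.ofReal_eq_zero]
    push_neg
    exact ⟨by simp [Real.pi_ne_zero], by norm_num⟩
  have hπ : (Real.pi : ℂ) ^ 2 ≠ 0 := by
    simpa using Complex.ofReal_ne_zero.mpr Real.pi_ne_zero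
  have : ((∑' d : ℕ, (μ d : ℝ) / d ^ 2 : ℝ) : ℂ) = 6 / (Real.pi : ℂ) ^ 2 := by
    rw [eq_div_iff hπ]
    field_simp at hz
    linear_combination hz
  exact_mod_cast this

lemma partial_tendsto :
    Tendsto (fun K : ℕ => ∑ d ∈ Icc 1 K, (μ d : ℝ) / d ^ 2) atTop
      (nhds (6 / Real.pi ^ 2)) := by
  have h := summable_mu_div_sq.hasSum.tendsto_sum_nat
  rw [tsum_mu_div_sq] at h
  have heq : (fun K : ℕ => ∑ d ∈ Icc 1 K, (μ d : ℝ) / d ^ 2)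
      = (fun n : ℕ => ∑ d ∈ range n, (μ d : ℝ) / d ^ 2) ∘ (fun K => K + 1) := by
    funext K
    simp only [Function.comp_apply]
    apply Finset.sum_subset
    · intro x hx
      rw [mem_Icc] at hx
      rw [mem_range]
      omega
    · intro x hx hnx
      rw [mem_range] at hx
      rw [mem_Icc] at hnx
      have : x = 0 := by omega
      subst this
      simp
  rw [heq]
  exact h.comp (tendsto_add_atTop_nat 1)

lemma sqrt_tendsto : Tendsto Nat.sqrt atTop atTop := by
  apply tendsto_atTop_atTop.mpr
  intro b
  exact ⟨b * b, fun n hn => Nat.le_sqrt.mpr hn⟩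

lemma floor_term_close {n d : ℕ} (hn : 1 ≤ n) (hd : 1 ≤ d) :
    |((n / d ^ 2 : ℕ) : ℝ) / n - 1 / (d : ℝ) ^ 2| ≤ (1 : ℝ) / n := by
  have hd2 : (0:ℝ) < (d:ℝ) ^ 2 := by positivity
  have hn0 : (0:ℝ) < (n:ℝ) := by exact_mod_cast hn
  have hA : ((n / d ^ 2 : ℕ) : ℝ) * (d:ℝ) ^ 2 ≤ n := by
    exact_mod_cast Nat.div_mul_le_self n (d ^ 2)
  have hBnat : n < (n / d ^ 2 + 1) * d ^ 2 := by
    have h1 := Nat.div_add_mod n (d ^ 2)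
    have h2 := Nat.mod_lt n (show 0 < d ^ 2 by positivity)
    have h3 : (n / d ^ 2 + 1) * d ^ 2 = d ^ 2 * (n / d ^ 2) + d ^ 2 := by ring
    omega
  have hB : (n : ℝ) < (((n / d ^ 2 : ℕ) : ℝ) + 1) * (d:ℝ) ^ 2 := by exact_mod_cast hBnat
  have hup : ((n / d ^ 2 : ℕ) : ℝ) / n ≤ 1 / (d:ℝ) ^ 2 := by
    rw [div_le_div_iff₀ hn0 hd2]
    nlinarith
  have hlo : 1 / (d:ℝ) ^ 2 - 1 / (n:ℝ) ≤ ((n / d ^ 2 : ℕ) : ℝ) / n := by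
    rw [div_sub_div _ _ (ne_of_gt hd2) (ne_of_gt hn0), div_le_div_iff₀ (by positivity) hn0]
    nlinarith
  rw [abs_le]
  constructor <;> linarith

lemma main_est {n : ℕ} (hn : 1 ≤ n) :
    |(((Icc 1 n).filter fun m => Squarefree m).card : ℝ) / n
      - ∑ d ∈ Icc 1 n.sqrt, (μ d : ℝ) / d ^ 2| ≤ (1 : ℝ) / n.sqrt := by
  set K := n.sqrt with hK
  have hK1 : 1 ≤ K := Nat.le_sqrt.mpr (by omega)
  have hKn : K ≤ n := Nat.sqrt_le_self n
  have hn0 : (0:ℝ) < n := by exact_mod_cast hn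
  have hK0 : (0:ℝ) < K := by exact_mod_cast hK1
  have h2 : ∑ d ∈ Icc 1 n, μ d * ((n / d ^ 2 : ℕ) : ℤ)
      = ∑ d ∈ Icc 1 K, μ d * ((n / d ^ 2 : ℕ) : ℤ) := by
    symm
    apply Finset.sum_subset (Icc_subset_Icc_right hKn)
    intro d hd hdn
    rw [mem_Icc] at hd hdn
    have hlt : n < d ^ 2 := Nat.sqrt_lt'.mp (by omega)
    rw [Nat.div_eq_of_lt hlt]
    simp
  have hcount : (((Icc 1 n).filter fun m => Squarefree m).card : ℝ)
      = ∑ d ∈ Icc 1 K, (μ d : ℝ) * ((n / d ^ 2 : ℕ) : ℝ) := by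
    have h3 : ((((Icc 1 n).filter fun m => Squarefree m).card : ℤ) : ℝ)
        = ((∑ d ∈ Icc 1 K, μ d * ((n / d ^ 2 : ℕ) : ℤ) : ℤ) : ℝ) := by
      rw [count_eq n, h2]
    push_cast at h3
    convert h3 using 2
    rw [← Int.natCast_pow, ← Int.natCast_div, Int.cast_natCast]
  rw [hcount, Finset.sum_div, ← Finset.sum_sub_distrib]
  have hterm : ∀ d ∈ Icc 1 K,
      |(μ d : ℝ) * ((n / d ^ 2 : ℕ) : ℝ) / n - (μ d : ℝ) / d ^ 2| ≤ (1:ℝ) / n := by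
    intro d hd
    rw [mem_Icc] at hd
    have heq : (μ d : ℝ) * ((n / d ^ 2 : ℕ) : ℝ) / n - (μ d : ℝ) / d ^ 2
        = (μ d : ℝ) * (((n / d ^ 2 : ℕ) : ℝ) / n - 1 / (d:ℝ) ^ 2) := by ring
    rw [heq, abs_mul]
    have h1 : |(μ d : ℝ)| ≤ 1 := by exact_mod_cast abs_moebius_le_one (n := d)
    have hft := floor_term_close hn hd.1
    calc |(μ d : ℝ)| * |((n / d ^ 2 : ℕ) : ℝ) / n - 1 / (d:ℝ) ^ 2|
        ≤ 1 * ((1:ℝ) / n) := mul_le_mul h1 hft (abs_nonneg _) zero_le_one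
      _ = (1:ℝ) / n := one_mul _
  have hsq : (K:ℝ) * K ≤ n := by exact_mod_cast Nat.sqrt_le n
  calc |∑ d ∈ Icc 1 K, ((μ d : ℝ) * ((n / d ^ 2 : ℕ) : ℝ) / n - (μ d : ℝ) / d ^ 2)|
      ≤ ∑ d ∈ Icc 1 K, |(μ d : ℝ) * ((n / d ^ 2 : ℕ) : ℝ) / n - (μ d : ℝ) / d ^ 2| :=
        Finset.abs_sum_le_sum_abs _ _
    _ ≤ ∑ _d ∈ Icc 1 K, (1:ℝ) / n := Finset.sum_le_sum hterm
    _ = (K:ℝ) / n := by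
        rw [Finset.sum_const, Nat.card_Icc]
        simp only [Nat.add_sub_cancel, nsmul_eq_mul]
        ring
    _ ≤ (1:ℝ) / K := by
        rw [div_le_div_iff₀ hn0 hK0]
        nlinarith

/-- The asymptotic density of squarefree numbers is `6/π²`: if `Q(n)` is the number of
squarefree integers in `{1, ..., n}`, then `Q(n)/n → 6/π²` as `n → ∞`. -/
theorem squarefree_density :
    Tendsto (fun n : ℕ =>
        (((Finset.Icc 1 n).filter fun m => Squarefree m).card : ℝ) / n) atTop
      (nhds (6 / Real.pi ^ 2)) := by
  have h1 : Tendsto (fun n : ℕ => (1:ℝ) / (n.sqrt : ℝ)) atTop (nhds 0) :=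
    tendsto_one_div_atTop_nhds_zero_nat.comp sqrt_tendsto
  have h2 : Tendsto (fun n : ℕ =>
      |∑ d ∈ Icc 1 n.sqrt, (μ d : ℝ) / d ^ 2 - 6 / Real.pi ^ 2|) atTop (nhds 0) := by
    have h3 := (partial_tendsto.comp sqrt_tendsto).sub_const (6 / Real.pi ^ 2)
    simp only [sub_self] at h3
    simpa using h3.abs
  have hb := h1.add h2
  rw [add_zero] at hb
  have key : Tendsto (fun n : ℕ =>
      (((Finset.Icc 1 n).filter fun m => Squarefree m).card : ℝ) / n - 6 / Real.pi ^ 2)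
      atTop (nhds 0) := by
    apply squeeze_zero_norm' ?_ hb
    filter_upwards [eventually_ge_atTop 1] with n hn
    have hme := main_est hn
    calc ‖(((Finset.Icc 1 n).filter fun m => Squarefree m).card : ℝ) / n - 6 / Real.pi ^ 2‖
        ≤ |(((Finset.Icc 1 n).filter fun m => Squarefree m).card : ℝ) / n
            - ∑ d ∈ Icc 1 n.sqrt, (μ d : ℝ) / d ^ 2|
          + |∑ d ∈ Icc 1 n.sqrt, (μ d : ℝ) / d ^ 2 - 6 / Real.pi ^ 2| := by
          rw [Real.norm_eq_abs]
          exact abs_sub_le _ _ _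
      _ ≤ (1:ℝ) / (n.sqrt : ℝ)
          + |∑ d ∈ Icc 1 n.sqrt, (μ d : ℝ) / d ^ 2 - 6 / Real.pi ^ 2| := by
          linarith
  have := key.add_const (6 / Real.pi ^ 2)
  simpa using this
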